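/- Let Z_m = {z_1,...,z_m} with m even and F a set of functions Z_m → ℝ uniformly bounded by B (|f(z)| ≤ B for all f ∈ F, z ∈ Z_m). Then |Q_{m,m/2}(F, Z_m) − R_m(F, Z_m)| ≤ 2B/√m, where Q is the permutational Rademacher complexity with n = m/2 and R_m is the conditional Rademacher complexity. -/

import Mathlib

open Finset
open scoped Classical

/-- Average of `f` over a finite set. -/
noncomputable def favg {α : Type*} (f : α → ℝ) (S : Finset α) : ℝ :=
  (∑ x ∈ S, f x) / S.card

/-- Real-valued sign of a Boolean sign: `+1` for `true`, `−1` for `false`. -/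
def bsgn (b : Bool) : ℝ := if b then 1 else -1

/-- Permutational Rademacher complexity of a finite nonempty class `F` of
functions on the `m`-point set `Fin m`, with split parameter `n`. -/
noncomputable def PRCu {m : ℕ} (F : Finset (Fin m → ℝ)) (hF : F.Nonempty)
    (n : ℕ) : ℝ :=
  (1 / (m.choose n : ℝ)) *
    ∑ S ∈ (Finset.univ : Finset (Fin m)).powersetCard n,
      F.sup' hF fun f => favg f (Finset.univ \ S) - favg f S

/-- Conditional Rademacher complexity of a finite nonempty class `F` of
functions on `Fin m`. -/
noncomputable def Rad {m : ℕ} (F : Finset (Fin m → ℝ)) (hF : F.Nonempty) : ℝ :=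
  (∑ ε : Fin m → Bool,
      F.sup' hF fun f => (2 / (m : ℝ)) * ∑ i, bsgn (ε i) * f i) / 2 ^ m


/-- sup-based functional on subsets. -/
noncomputable def Gfn {m : ℕ} (F : Finset (Fin m → ℝ)) (hF : F.Nonempty)
    (A : Finset (Fin m)) : ℝ :=
  F.sup' hF fun f => (2 / (m : ℝ)) * (∑ i ∈ A, f i - ∑ i ∈ Finset.univ \ A, f i)

lemma sup'_sub_le' {α : Type*} (F : Finset α) (hF : F.Nonempty) (a b : α → ℝ) (c : ℝ)
    (h : ∀ f ∈ F, a f - b f ≤ c) : F.sup' hF a - F.sup' hF b ≤ c := by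
  rw [sub_le_iff_le_add]
  refine Finset.sup'_le hF a fun f hf => ?_
  have h1 : a f ≤ b f + c := by linarith [h f hf]
  have h2 : b f ≤ F.sup' hF b := Finset.le_sup' b hf
  linarith

lemma abs_sup'_sub_le {α : Type*} (F : Finset α) (hF : F.Nonempty) (a b : α → ℝ) (c : ℝ)
    (h : ∀ f ∈ F, |a f - b f| ≤ c) : |F.sup' hF a - F.sup' hF b| ≤ c := by
  rw [abs_sub_le_iff]
  constructor
  · exact sup'_sub_le' F hF a b c fun f hf => (abs_le.1 (h f hf)).2
  · exact sup'_sub_le' F hF b a c fun f hf => by have := (abs_le.1 (h f hf)).1; linarith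

lemma Gfn_lip {m : ℕ} (hm : 0 < m) (F : Finset (Fin m → ℝ)) (hF : F.Nonempty)
    {B : ℝ} (hB : ∀ f ∈ F, ∀ i, |f i| ≤ B)
    {A A' : Finset (Fin m)} (h : A' ⊆ A) :
    |Gfn F hF A - Gfn F hF A'| ≤ 4 * B / m * ((A.card : ℝ) - A'.card) := by
  have hm0 : (0:ℝ) < m := by exact_mod_cast hm
  apply abs_sup'_sub_le
  intro f hf
  have h1 : ∑ i ∈ A \ A', f i + ∑ i ∈ A', f i = ∑ i ∈ A, f i := Finset.sum_sdiff h
  have h2 : (univ : Finset (Fin m)) \ A' = (univ \ A) ∪ (A \ A') := by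
    ext i
    simp only [Finset.mem_sdiff, Finset.mem_union, Finset.mem_univ, true_and]
    constructor
    · intro hi
      by_cases hiA : i ∈ A
      · exact Or.inr ⟨hiA, hi⟩
      · exact Or.inl hiA
    · rintro (hi | ⟨_, hi⟩)
      · exact fun hA' => hi (h hA')
      · exact hi
  have hd : Disjoint ((univ : Finset (Fin m)) \ A) (A \ A') := by
    rw [Finset.disjoint_left]
    intro i hi hi2
    rw [Finset.mem_sdiff] at hi hi2
    exact hi.2 hi2.1
  have h3 : ∑ i ∈ (univ : Finset (Fin m)) \ A', f i
      = ∑ i ∈ univ \ A, f i + ∑ i ∈ A \ A', f i := by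
    rw [h2, Finset.sum_union hd]
  have key : (2 / (m:ℝ)) * (∑ i ∈ A, f i - ∑ i ∈ univ \ A, f i)
      - (2 / (m:ℝ)) * (∑ i ∈ A', f i - ∑ i ∈ univ \ A', f i)
      = 4 / m * ∑ i ∈ A \ A', f i := by
    rw [← mul_sub]
    have : (∑ i ∈ A, f i - ∑ i ∈ univ \ A, f i) - (∑ i ∈ A', f i - ∑ i ∈ univ \ A', f i)
        = 2 * ∑ i ∈ A \ A', f i := by linarith
    rw [this]; ring
  rw [key]
  have hcard : ((A \ A').card : ℝ) = (A.card : ℝ) - A'.card := by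
    rw [Finset.card_sdiff_of_subset h]
    exact_mod_cast Nat.cast_sub (Finset.card_le_card h)
  have hS : |∑ i ∈ A \ A', f i| ≤ B * ((A.card : ℝ) - A'.card) := by
    calc |∑ i ∈ A \ A', f i| ≤ ∑ i ∈ A \ A', |f i| := Finset.abs_sum_le_sum_abs _ _
      _ ≤ (A \ A').card • B := Finset.sum_le_card_nsmul _ _ _ fun i _ => hB f hf i
      _ = B * ((A.card : ℝ) - A'.card) := by rw [nsmul_eq_mul, hcard, mul_comm]
  calc |4 / (m:ℝ) * ∑ i ∈ A \ A', f i| = 4 / m * |∑ i ∈ A \ A', f i| := by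
        rw [abs_mul, abs_of_nonneg (by positivity : (0:ℝ) ≤ 4 / (m:ℝ))]
    _ ≤ 4 / m * (B * ((A.card : ℝ) - A'.card)) := by
        apply mul_le_mul_of_nonneg_left hS (by positivity)
    _ = 4 * B / m * ((A.card : ℝ) - A'.card) := by ring

lemma signed_sum_eq {m : ℕ} (A : Finset (Fin m)) (f : Fin m → ℝ) :
    ∑ i, bsgn (decide (i ∈ A)) * f i = ∑ i ∈ A, f i - ∑ i ∈ univ \ A, f i := by
  rw [← Finset.sum_sdiff (Finset.subset_univ A)]
  have e1 : ∑ i ∈ A, bsgn (decide (i ∈ A)) * f i = ∑ i ∈ A, f i :=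
    Finset.sum_congr rfl fun i hi => by simp [bsgn, hi]
  have e2 : ∑ i ∈ univ \ A, bsgn (decide (i ∈ A)) * f i = -∑ i ∈ univ \ A, f i := by
    rw [← Finset.sum_neg_distrib]
    refine Finset.sum_congr rfl fun i hi => ?_
    rw [Finset.mem_sdiff] at hi
    simp [bsgn, hi.2]
  rw [e1, e2]; ring

lemma Rad_eq {m : ℕ} (F : Finset (Fin m → ℝ)) (hF : F.Nonempty) :
    Rad F hF = (∑ A ∈ (univ : Finset (Fin m)).powerset, Gfn F hF A) / 2 ^ m := by
  unfold Rad
  congr 1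
  rw [Finset.powerset_univ]
  refine (Fintype.sum_bijective (fun (A : Finset (Fin m)) (i : Fin m) => decide (i ∈ A))
    ?_ (fun A => Gfn F hF A) _ ?_).symm
  · constructor
    · intro A A' hAA'
      ext i
      have := congrFun hAA' i
      simpa using this
    · intro ε
      exact ⟨univ.filter (fun i => ε i = true), by funext i; simp⟩
  · intro A
    unfold Gfn
    refine Finset.sup'_congr hF rfl fun f _ => ?_
    rw [signed_sum_eq]

lemma PRC_eq {m : ℕ} (hm : 0 < m) (hme : Even m) (F : Finset (Fin m → ℝ)) (hF : F.Nonempty) :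
    PRCu F hF (m / 2)
      = (∑ A ∈ powersetCard (m / 2) (univ : Finset (Fin m)), Gfn F hF A)
        / (m.choose (m / 2) : ℝ) := by
  obtain ⟨t, ht⟩ := hme
  have hmn : m / 2 = t := by omega
  have ht0 : 0 < t := by omega
  unfold PRCu
  rw [one_div_mul_eq_div]
  congr 1
  refine Finset.sum_nbij' (fun S => univ \ S) (fun A => univ \ A) ?_ ?_ ?_ ?_ ?_
  · intro S hS
    rw [Finset.mem_powersetCard_univ] at hS ⊢
    rw [Finset.card_sdiff_of_subset (Finset.subset_univ S), Finset.card_univ, Fintype.card_fin, hS]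
    omega
  · intro A hA
    rw [Finset.mem_powersetCard_univ] at hA ⊢
    rw [Finset.card_sdiff_of_subset (Finset.subset_univ A), Finset.card_univ, Fintype.card_fin, hA]
    omega
  · intro S _; simp
  · intro A _; simp
  · intro S hS
    rw [Finset.mem_powersetCard_univ] at hS
    have hcS : ((univ : Finset (Fin m)) \ S).card = t := by
      rw [Finset.card_sdiff_of_subset (Finset.subset_univ S), Finset.card_univ, Fintype.card_fin, hS]
      omega
    unfold Gfn
    refine Finset.sup'_congr hF rfl fun f _ => ?_
    have hdd : (univ : Finset (Fin m)) \ (univ \ S) = S := by simp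
    rw [hdd]
    unfold favg
    rw [hcS, hS, hmn]
    have htR : ((t:ℝ)) ≠ 0 := by exact_mod_cast ht0.ne'
    have hmR : (m:ℝ) = 2 * t := by exact_mod_cast (by omega : m = 2 * t)
    rw [hmR]
    field_simp

lemma layer_avg {m : ℕ} (hm : 0 < m) (F : Finset (Fin m → ℝ)) (hF : F.Nonempty)
    {B : ℝ} (hB : ∀ f ∈ F, ∀ i, |f i| ≤ B) {k l : ℕ}
    (hkl : k ≤ l) (hlm : l ≤ m) :
    |(∑ A ∈ powersetCard l (univ : Finset (Fin m)), Gfn F hF A) / (m.choose l : ℝ)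
      - (∑ A ∈ powersetCard k (univ : Finset (Fin m)), Gfn F hF A) / (m.choose k : ℝ)|
      ≤ 4 * B / m * ((l : ℝ) - k) := by
  have hkm : k ≤ m := hkl.trans hlm
  set G := Gfn F hF with hG
  set r : Finset (Finset (Fin m) × Finset (Fin m)) :=
    (powersetCard l (univ : Finset (Fin m)) ×ˢ powersetCard k (univ : Finset (Fin m))).filter
      (fun p => p.2 ⊆ p.1) with hr
  have hmem : ∀ p : Finset (Fin m) × Finset (Fin m),
      p ∈ r ↔ p.1 ∈ powersetCard l (univ : Finset (Fin m)) ∧ p.2 ∈ p.1.powersetCard k := by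
    intro p
    rw [hr, Finset.mem_filter, Finset.mem_product]
    simp only [Finset.mem_powersetCard_univ, Finset.mem_powersetCard]
    tauto
  have hmem' : ∀ p : Finset (Fin m) × Finset (Fin m),
      p ∈ r ↔ p.2 ∈ powersetCard k (univ : Finset (Fin m)) ∧
        p.1 ∈ (powersetCard l (univ : Finset (Fin m))).filter (fun A => p.2 ⊆ A) := by
    intro p
    rw [hr, Finset.mem_filter, Finset.mem_product, Finset.mem_filter]
    tauto
  -- count supersets
  have hcount : ∀ A' ∈ powersetCard k (univ : Finset (Fin m)),
      ((powersetCard l (univ : Finset (Fin m))).filter fun A => A' ⊆ A).card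
        = (m - k).choose (m - l) := by
    intro A' hA'
    have hA'k : A'.card = k := Finset.mem_powersetCard_univ.1 hA'
    have hcompl : ((univ : Finset (Fin m)) \ A').card = m - k := by
      rw [Finset.card_sdiff_of_subset (Finset.subset_univ _), Finset.card_univ, Fintype.card_fin, hA'k]
    have htarget : (((univ : Finset (Fin m)) \ A').powersetCard (m - l)).card
        = (m - k).choose (m - l) := by
      rw [Finset.card_powersetCard, hcompl]
    rw [← htarget]
    apply Finset.card_nbij' (fun A => univ \ A) (fun Bs => univ \ Bs)
    · intro A hA
      rw [Finset.mem_coe, Finset.mem_filter, Finset.mem_powersetCard_univ] at hA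
      rw [Finset.mem_coe, Finset.mem_powersetCard]
      constructor
      · exact Finset.sdiff_subset_sdiff (Finset.Subset.refl _) hA.2
      · rw [Finset.card_sdiff_of_subset (Finset.subset_univ _), Finset.card_univ, Fintype.card_fin, hA.1]
    · intro Bs hBs
      rw [Finset.mem_coe, Finset.mem_powersetCard] at hBs
      have hBsub : Bs ⊆ univ \ A' := hBs.1
      have hBcard : Bs.card = m - l := hBs.2
      rw [Finset.mem_coe, Finset.mem_filter, Finset.mem_powersetCard_univ]
      constructor
      · rw [Finset.card_sdiff_of_subset (Finset.subset_univ _), Finset.card_univ, Fintype.card_fin, hBcard]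
        omega
      · rw [Finset.subset_sdiff]
        refine ⟨Finset.subset_univ _, ?_⟩
        have := (Finset.subset_sdiff.1 hBsub).2
        exact this.symm
    · intro A _; simp
    · intro Bs _; simp
  -- the three sum computations
  have e2 : ∑ p ∈ r, G p.1 = (l.choose k : ℝ) * ∑ A ∈ powersetCard l (univ : Finset (Fin m)), G A := by
    rw [Finset.sum_finset_product r _ _ hmem (f := fun p => G p.1), Finset.mul_sum]
    refine Finset.sum_congr rfl fun A hA => ?_
    calc ∑ a ∈ powersetCard k A, G (A, a).1 = ∑ _a ∈ powersetCard k A, G A := rfl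
      _ = (l.choose k : ℝ) * G A := by
          rw [Finset.sum_const, Finset.card_powersetCard, Finset.mem_powersetCard_univ.1 hA,
            nsmul_eq_mul]
  have e3 : ∑ p ∈ r, G p.2
      = ((m - k).choose (m - l) : ℝ) * ∑ A ∈ powersetCard k (univ : Finset (Fin m)), G A := by
    rw [Finset.sum_finset_product_right r (powersetCard k (univ : Finset (Fin m)))
      (fun A' => (powersetCard l (univ : Finset (Fin m))).filter fun A => A' ⊆ A) hmem'
      (f := fun p => G p.2), Finset.mul_sum]
    refine Finset.sum_congr rfl fun A' hA' => ?_
    calc ∑ a ∈ (powersetCard l (univ : Finset (Fin m))).filter (fun A => A' ⊆ A), G (a, A').2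
        = ∑ _a ∈ (powersetCard l (univ : Finset (Fin m))).filter (fun A => A' ⊆ A), G A' := rfl
      _ = ((m - k).choose (m - l) : ℝ) * G A' := by
          rw [Finset.sum_const, hcount A' hA', nsmul_eq_mul]
  have hcard : (r.card : ℝ) = (m.choose l : ℝ) * (l.choose k : ℝ) := by
    have h1 : r.card = ∑ A ∈ powersetCard l (univ : Finset (Fin m)), (A.powersetCard k).card := by
      rw [Finset.card_eq_sum_ones, Finset.sum_finset_product r _ _ hmem (f := fun _ => 1)]
      exact Finset.sum_congr rfl fun A hA => (Finset.card_eq_sum_ones _).symm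
    have h2 : ∀ A ∈ powersetCard l (univ : Finset (Fin m)), (A.powersetCard k).card = l.choose k := by
      intro A hA
      rw [Finset.card_powersetCard, Finset.mem_powersetCard_univ.1 hA]
    rw [h1, Finset.sum_congr rfl h2, Finset.sum_const, Finset.card_powersetCard,
      Finset.card_univ, Fintype.card_fin, smul_eq_mul]
    push_cast
    ring
  -- pointwise bound
  have hbound : |∑ p ∈ r, (G p.1 - G p.2)| ≤ (r.card : ℝ) * (4 * B / m * ((l:ℝ) - k)) := by
    calc |∑ p ∈ r, (G p.1 - G p.2)| ≤ ∑ p ∈ r, |G p.1 - G p.2| := Finset.abs_sum_le_sum_abs _ _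
      _ ≤ ∑ _p ∈ r, (4 * B / m * ((l:ℝ) - k)) := by
          refine Finset.sum_le_sum fun p hp => ?_
          obtain ⟨h1, h2⟩ := (hmem p).1 hp
          have hsub : p.2 ⊆ p.1 := (Finset.mem_powersetCard.1 h2).1
          have hlip := Gfn_lip hm F hF hB hsub
          rw [← hG] at hlip
          rwa [Finset.mem_powersetCard_univ.1 h1, (Finset.mem_powersetCard.1 h2).2] at hlip
      _ = (r.card : ℝ) * (4 * B / m * ((l:ℝ) - k)) := by rw [Finset.sum_const, nsmul_eq_mul]
  -- choose identity
  have hid : ((m - k).choose (m - l) : ℝ) * (m.choose k : ℝ)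
      = (m.choose l : ℝ) * (l.choose k : ℝ) := by
    have h1 := Nat.choose_mul (n := m) hkl
    have h2 : (m - k).choose (l - k) = (m - k).choose (m - l) := by
      have h3 : (m - k) - (m - l) = l - k := by omega
      rw [← h3, Nat.choose_symm (by omega)]
    have : m.choose l * l.choose k = (m - k).choose (m - l) * m.choose k := by
      rw [h1, h2]; ring
    exact_mod_cast this.symm
  have hCl : (0:ℝ) < (m.choose l : ℝ) := by exact_mod_cast Nat.choose_pos hlm
  have hCk : (0:ℝ) < (m.choose k : ℝ) := by exact_mod_cast Nat.choose_pos hkm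
  have hClk : (0:ℝ) < (l.choose k : ℝ) := by exact_mod_cast Nat.choose_pos hkl
  set D : ℝ := (∑ A ∈ powersetCard l (univ : Finset (Fin m)), G A) / (m.choose l : ℝ)
      - (∑ A ∈ powersetCard k (univ : Finset (Fin m)), G A) / (m.choose k : ℝ) with hD
  have key : ∑ p ∈ r, (G p.1 - G p.2) = (m.choose l : ℝ) * (l.choose k : ℝ) * D := by
    have p0 : (m.choose l : ℝ) * (l.choose k : ℝ) * D
        = (m.choose l : ℝ) * (l.choose k : ℝ)
            * ((∑ A ∈ powersetCard l (univ : Finset (Fin m)), G A) / (m.choose l : ℝ))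
          - (m.choose l : ℝ) * (l.choose k : ℝ)
            * ((∑ A ∈ powersetCard k (univ : Finset (Fin m)), G A) / (m.choose k : ℝ)) := by
      rw [hD]; ring
    have p1 : (m.choose l : ℝ) * (l.choose k : ℝ)
        * ((∑ A ∈ powersetCard l (univ : Finset (Fin m)), G A) / (m.choose l : ℝ))
        = (l.choose k : ℝ) * ∑ A ∈ powersetCard l (univ : Finset (Fin m)), G A := by
      field_simp
    have p2 : (m.choose l : ℝ) * (l.choose k : ℝ)
        * ((∑ A ∈ powersetCard k (univ : Finset (Fin m)), G A) / (m.choose k : ℝ))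
        = ((m - k).choose (m - l) : ℝ) * ∑ A ∈ powersetCard k (univ : Finset (Fin m)), G A := by
      rw [← hid]
      field_simp
    rw [Finset.sum_sub_distrib, e2, e3, p0, p1, p2]
  have habs : (m.choose l : ℝ) * (l.choose k : ℝ) * |D|
      ≤ (m.choose l : ℝ) * (l.choose k : ℝ) * (4 * B / m * ((l:ℝ) - k)) := by
    calc (m.choose l : ℝ) * (l.choose k : ℝ) * |D|
        = |∑ p ∈ r, (G p.1 - G p.2)| := by
          rw [key, abs_mul, abs_of_pos (mul_pos hCl hClk)]
      _ ≤ (r.card : ℝ) * (4 * B / m * ((l:ℝ) - k)) := hbound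
      _ = (m.choose l : ℝ) * (l.choose k : ℝ) * (4 * B / m * ((l:ℝ) - k)) := by rw [hcard]
  exact le_of_mul_le_mul_left habs (by positivity)

lemma sum_powerset_sq {α : Type*} [DecidableEq α] (s : Finset α) :
    ∑ A ∈ s.powerset, ((2 * A.card : ℝ) - s.card) ^ 2 = s.card * 2 ^ s.card := by
  induction s using Finset.induction_on with
  | empty => simp
  | @insert a s ha ih =>
    rw [Finset.sum_powerset_insert ha, Finset.card_insert_of_notMem ha]
    push_cast
    have hins : ∀ t ∈ s.powerset, ((2 * (insert a t).card : ℝ) - (s.card + 1)) ^ 2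
        = ((2 * t.card : ℝ) + 2 - (s.card + 1)) ^ 2 := by
      intro t ht
      have hat : a ∉ t := fun hat => ha (Finset.mem_powerset.1 ht hat)
      rw [Finset.card_insert_of_notMem hat]
      push_cast
      ring_nf
    rw [Finset.sum_congr rfl hins]
    have comb : ∀ t ∈ s.powerset,
        ((2 * t.card : ℝ) - (s.card + 1)) ^ 2 + ((2 * t.card : ℝ) + 2 - (s.card + 1)) ^ 2
          = 2 * ((2 * t.card : ℝ) - s.card) ^ 2 + 2 := by
      intro t _
      ring
    have : ∑ t ∈ s.powerset, ((2 * t.card : ℝ) - ((s.card : ℝ) + 1)) ^ 2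
        + ∑ t ∈ s.powerset, ((2 * t.card : ℝ) + 2 - ((s.card : ℝ) + 1)) ^ 2
        = ∑ t ∈ s.powerset, (2 * ((2 * t.card : ℝ) - s.card) ^ 2 + 2) := by
      rw [← Finset.sum_add_distrib]
      exact Finset.sum_congr rfl comb
    push_cast at this ih ⊢
    rw [this, Finset.sum_add_distrib, Finset.sum_const, Finset.card_powerset, ← Finset.mul_sum,
      ih]
    ring
  
lemma binom_second_moment (m : ℕ) :
    ∑ k ∈ Finset.range (m + 1), (m.choose k : ℝ) * ((2 * k : ℝ) - m) ^ 2
      = m * 2 ^ m := by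
  have h := Finset.sum_powerset_apply_card (fun k => ((2 * k : ℝ) - m) ^ 2)
    (x := (univ : Finset (Fin m)))
  simp only [Finset.card_univ, Fintype.card_fin, nsmul_eq_mul] at h
  rw [← h]
  have h2 := sum_powerset_sq (univ : Finset (Fin m))
  simp only [Finset.card_univ, Fintype.card_fin] at h2
  exact h2

lemma binom_abs_moment (m : ℕ) :
    ∑ k ∈ Finset.range (m + 1), (m.choose k : ℝ) * |(2 * k : ℝ) - m|
      ≤ 2 ^ m * Real.sqrt m := by
  set a := ∑ k ∈ Finset.range (m + 1), (m.choose k : ℝ) * |(2 * k : ℝ) - m| with hadef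
  have ha : 0 ≤ a := Finset.sum_nonneg fun k _ => by positivity
  have hsum2 : (∑ k ∈ Finset.range (m + 1), (m.choose k : ℝ)) = 2 ^ m := by
    exact_mod_cast Nat.sum_range_choose m
  have hsq : a ^ 2 ≤ 2 ^ m * (m * 2 ^ m) := by
    have hcs := Finset.sum_mul_sq_le_sq_mul_sq (Finset.range (m + 1))
      (fun k => Real.sqrt (m.choose k))
      (fun k => Real.sqrt (m.choose k) * |(2 * k : ℝ) - m|)
    have e1 : ∀ k ∈ Finset.range (m + 1),
        Real.sqrt (m.choose k) * (Real.sqrt (m.choose k) * |(2 * k : ℝ) - m|)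
          = (m.choose k : ℝ) * |(2 * k : ℝ) - m| := by
      intro k _
      rw [← mul_assoc, Real.mul_self_sqrt (by positivity)]
    have e2 : ∀ k ∈ Finset.range (m + 1),
        (Real.sqrt (m.choose k)) ^ 2 = (m.choose k : ℝ) := by
      intro k _
      exact Real.sq_sqrt (by positivity)
    have e3 : ∀ k ∈ Finset.range (m + 1),
        (Real.sqrt (m.choose k) * |(2 * k : ℝ) - m|) ^ 2
          = (m.choose k : ℝ) * ((2 * k : ℝ) - m) ^ 2 := by
      intro k _
      rw [mul_pow, Real.sq_sqrt (by positivity), sq_abs]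
    rw [Finset.sum_congr rfl e1, Finset.sum_congr rfl e2, Finset.sum_congr rfl e3,
      hsum2, binom_second_moment] at hcs
    exact hcs
  have hrhs : (2 ^ m * Real.sqrt m) ^ 2 = 2 ^ m * (m * 2 ^ m) := by
    rw [mul_pow, Real.sq_sqrt (by positivity : (0:ℝ) ≤ (m:ℝ))]
    ring
  have hb : (0:ℝ) ≤ 2 ^ m * Real.sqrt m := by positivity
  calc a = Real.sqrt (a ^ 2) := (Real.sqrt_sq ha).symm
    _ ≤ Real.sqrt (2 ^ m * (m * 2 ^ m)) := Real.sqrt_le_sqrt hsq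
    _ = 2 ^ m * Real.sqrt m := by rw [← hrhs, Real.sqrt_sq hb]

lemma powerset_sum_layers {m : ℕ} (g : Finset (Fin m) → ℝ) :
    ∑ A ∈ (univ : Finset (Fin m)).powerset, g A
      = ∑ k ∈ Finset.range (m + 1), ∑ A ∈ powersetCard k (univ : Finset (Fin m)), g A := by
  rw [← Finset.sum_fiberwise_of_maps_to (g := fun A : Finset (Fin m) => A.card)
    (t := Finset.range (m + 1)) ?_ g]
  · refine Finset.sum_congr rfl fun k _ => ?_
    refine Finset.sum_congr ?_ fun _ _ => rfl
    rw [Finset.powersetCard_eq_filter]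
  · intro A _
    rw [Finset.mem_range, Nat.lt_succ_iff]
    simpa using Finset.card_le_univ A

/-- For a class uniformly bounded by `B`, the PRC and the conditional
Rademacher complexity differ by at most `2B/√m`. -/
theorem abs_PRC_sub_Rad_le {m : ℕ} (hm : 0 < m) (hme : Even m) (B : ℝ)
    (F : Finset (Fin m → ℝ)) (hF : F.Nonempty)
    (hB : ∀ f ∈ F, ∀ i, |f i| ≤ B) :
    |PRCu F hF (m / 2) - Rad F hF| ≤ 2 * B / Real.sqrt m := by
  have hm0 : (0:ℝ) < m := by exact_mod_cast hm
  have hB0 : 0 ≤ B := by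
    have hFq := hF
    obtain ⟨f, hf⟩ := hFq
    exact (abs_nonneg _).trans (hB f hf ⟨0, hm⟩)
  have hhalf : 2 * (m / 2) = m := by
    obtain ⟨t, ht⟩ := hme; omega
  have hnm : m / 2 ≤ m := by omega
  have h2m : (0:ℝ) < 2 ^ m := by positivity
  set Q : ℕ → ℝ := fun k =>
    (∑ A ∈ powersetCard k (univ : Finset (Fin m)), Gfn F hF A) / (m.choose k : ℝ) with hQ
  have hcast : ((m / 2 : ℕ) : ℝ) = (m : ℝ) / 2 := by
    have : ((2 * (m / 2) : ℕ) : ℝ) = (m : ℝ) := by exact_mod_cast congrArg (Nat.cast (R := ℝ)) hhalf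
    push_cast at this
    linarith
  -- pointwise layer bound
  have key : ∀ k ∈ Finset.range (m + 1),
      |Q (m / 2) - Q k| ≤ 4 * B / m * (|(2 * k : ℝ) - m| / 2) := by
    intro k hk
    have hkm : k ≤ m := by
      rw [Finset.mem_range] at hk; omega
    rcases le_total k (m / 2) with h | h
    · have h0 := layer_avg hm F hF hB h hnm
      have this2 : |Q (m / 2) - Q k| ≤ 4 * B / m * (((m / 2 : ℕ) : ℝ) - k) := h0
      refine this2.trans (le_of_eq ?_)
      have hkle : (k : ℝ) ≤ (m : ℝ) / 2 := by
        rw [← hcast]; exact_mod_cast h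
      rw [hcast, abs_of_nonpos (by linarith)]
      ring
    · have h0 := layer_avg hm F hF hB h hkm
      have this2 : |Q k - Q (m / 2)| ≤ 4 * B / m * ((k : ℝ) - ((m / 2 : ℕ) : ℝ)) := h0
      rw [abs_sub_comm] at this2
      refine this2.trans (le_of_eq ?_)
      have hkge : (m : ℝ) / 2 ≤ (k : ℝ) := by
        rw [← hcast]; exact_mod_cast h
      rw [hcast, abs_of_nonneg (by linarith)]
      ring
  -- rewrite both complexities
  rw [PRC_eq hm hme F hF, Rad_eq F hF, powerset_sum_layers (Gfn F hF)]
  have hQn : (∑ A ∈ powersetCard (m / 2) (univ : Finset (Fin m)), Gfn F hF A)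
      / (m.choose (m / 2) : ℝ) = Q (m / 2) := rfl
  rw [hQn]
  -- expand the Rademacher side
  have hT : ∀ k ∈ Finset.range (m + 1),
      (∑ A ∈ powersetCard k (univ : Finset (Fin m)), Gfn F hF A)
        = (m.choose k : ℝ) * Q k := by
    intro k hk
    have hkm : k ≤ m := by rw [Finset.mem_range] at hk; omega
    have hC : (m.choose k : ℝ) ≠ 0 := by
      exact_mod_cast (Nat.choose_pos hkm).ne'
    rw [hQ]
    field_simp
  have hsum2 : (∑ k ∈ Finset.range (m + 1), (m.choose k : ℝ)) = 2 ^ m := by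
    exact_mod_cast Nat.sum_range_choose m
  have expand : Q (m / 2)
      - (∑ k ∈ Finset.range (m + 1), ∑ A ∈ powersetCard k (univ : Finset (Fin m)), Gfn F hF A)
        / 2 ^ m
      = (∑ k ∈ Finset.range (m + 1), (m.choose k : ℝ) * (Q (m / 2) - Q k)) / 2 ^ m := by
    rw [Finset.sum_congr rfl hT]
    have e : ∑ k ∈ Finset.range (m + 1), (m.choose k : ℝ) * (Q (m / 2) - Q k)
        = (∑ k ∈ Finset.range (m + 1), (m.choose k : ℝ)) * Q (m / 2)
          - ∑ k ∈ Finset.range (m + 1), (m.choose k : ℝ) * Q k := by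
      rw [Finset.sum_mul]
      rw [← Finset.sum_sub_distrib]
      exact Finset.sum_congr rfl fun k _ => by ring
    rw [e, hsum2]
    field_simp
  rw [expand, abs_div, abs_of_pos h2m]
  -- bound the numerator
  have hnum : |∑ k ∈ Finset.range (m + 1), (m.choose k : ℝ) * (Q (m / 2) - Q k)|
      ≤ 2 * B / m * (2 ^ m * Real.sqrt m) := by
    calc |∑ k ∈ Finset.range (m + 1), (m.choose k : ℝ) * (Q (m / 2) - Q k)|
        ≤ ∑ k ∈ Finset.range (m + 1), |(m.choose k : ℝ) * (Q (m / 2) - Q k)| :=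
          Finset.abs_sum_le_sum_abs _ _
      _ ≤ ∑ k ∈ Finset.range (m + 1),
            (2 * B / m) * ((m.choose k : ℝ) * |(2 * k : ℝ) - m|) := by
          refine Finset.sum_le_sum fun k hk => ?_
          rw [abs_mul, abs_of_nonneg (by positivity : (0:ℝ) ≤ (m.choose k : ℝ))]
          have h1 := key k hk
          calc (m.choose k : ℝ) * |Q (m / 2) - Q k|
              ≤ (m.choose k : ℝ) * (4 * B / m * (|(2 * k : ℝ) - m| / 2)) :=
                mul_le_mul_of_nonneg_left h1 (by positivity)
            _ = (2 * B / m) * ((m.choose k : ℝ) * |(2 * k : ℝ) - m|) := by ring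
      _ = (2 * B / m) * ∑ k ∈ Finset.range (m + 1),
            (m.choose k : ℝ) * |(2 * k : ℝ) - m| := by rw [Finset.mul_sum]
      _ ≤ (2 * B / m) * (2 ^ m * Real.sqrt m) :=
          mul_le_mul_of_nonneg_left (binom_abs_moment m) (by positivity)
      _ = 2 * B / m * (2 ^ m * Real.sqrt m) := by ring
  calc |∑ k ∈ Finset.range (m + 1), (m.choose k : ℝ) * (Q (m / 2) - Q k)| / 2 ^ m
      ≤ (2 * B / m * (2 ^ m * Real.sqrt m)) / 2 ^ m := by
        gcongr
    _ = 2 * B / Real.sqrt m := by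
        have hsm : Real.sqrt m * Real.sqrt m = (m : ℝ) := Real.mul_self_sqrt hm0.le
        have hsm0 : Real.sqrt m ≠ 0 := ne_of_gt (Real.sqrt_pos.2 hm0)
        field_simp
        linear_combination B * hsm
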